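/- The number of standard Young tableaux of rectangular shape a × b equals (ab)! · (∏_{i=0}^{a−1} i!) / (∏_{i=0}^{a−1} (b+i)!). -/

import Mathlib

open Finset

set_option maxHeartbeats 1000000

namespace HLFAux


variable {n a : ℕ}

def cnt (w : Fin n → Fin a) (i : Fin a) (k : ℕ) : ℕ :=
  (Finset.univ.filter fun v : Fin n => (v : ℕ) < k ∧ w v = i).card

section B

def path (σ : Equiv.Perm (Fin a)) (w : Fin n → Fin a) (k : ℕ) (i : Fin a) : ℕ :=
  (σ i : ℕ) + cnt w i k

lemma cnt_zero (w : Fin n → Fin a) (i : Fin a) : cnt w i 0 = 0 := by simp [cnt]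

lemma cnt_mono (w : Fin n → Fin a) (i : Fin a) {k k' : ℕ} (h : k ≤ k') :
    cnt w i k ≤ cnt w i k' := by
  apply card_le_card
  intro v hv
  simp only [mem_filter] at *
  exact ⟨hv.1, lt_of_lt_of_le hv.2.1 h, hv.2.2⟩

lemma cnt_succ_le (w : Fin n → Fin a) (i : Fin a) (k : ℕ) :
    cnt w i (k + 1) ≤ cnt w i k + 1 := by
  have hsub : (Finset.univ.filter fun v : Fin n => (v : ℕ) < k + 1 ∧ w v = i) ⊆
      (Finset.univ.filter fun v : Fin n => (v : ℕ) < k ∧ w v = i) ∪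
      (Finset.univ.filter fun v : Fin n => (v : ℕ) = k) := by
    intro v hv
    simp only [mem_filter, mem_union, mem_univ, true_and] at *
    rcases hv with ⟨h1, h2⟩
    by_cases hvk : (v : ℕ) < k
    · exact Or.inl ⟨hvk, h2⟩
    · exact Or.inr (by omega)
  calc cnt w i (k+1) ≤ _ := card_le_card hsub
    _ ≤ _ + _ := card_union_le _ _
    _ ≤ cnt w i k + 1 := by
      apply Nat.add_le_add_left
      apply card_le_one.mpr fun u hu v hv => ?_
      simp only [mem_filter] at hu hv
      exact Fin.ext (hu.2.trans hv.2.symm)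

lemma cnt_stable (w : Fin n → Fin a) (i : Fin a) {k : ℕ} (h : n ≤ k) :
    cnt w i k = cnt w i n := by
  unfold cnt; congr 1; apply filter_congr; intro v _
  have := v.isLt
  constructor <;> intro hv <;> exact ⟨by omega, hv.2⟩

lemma cnt_split (w : Fin n → Fin a) (i : Fin a) {K k : ℕ} (h : K ≤ k) :
    cnt w i k = cnt w i K +
      (Finset.univ.filter fun v : Fin n => K ≤ (v : ℕ) ∧ (v : ℕ) < k ∧ w v = i).card := by
  rw [cnt, cnt, ← card_union_of_disjoint]
  · congr 1
    ext v
    simp only [mem_filter, mem_union, mem_univ, true_and]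
    omega
  · rw [disjoint_left]
    intro v hv hv'
    simp only [mem_filter] at hv hv'
    omega

/-- discrete intermediate value theorem -/
lemma ivt (d : ℕ → ℤ) (hstep : ∀ k, d (k + 1) ≤ d k + 1 ∧ d k ≤ d (k + 1) + 1)
    (m : ℕ) (h0 : d 0 < 0) (h1 : 0 < d m) : ∃ k ≤ m, d k = 0 := by
  have hex : ∃ k, 0 < d k := ⟨m, h1⟩
  have hKm : Nat.find hex ≤ m := Nat.find_min' hex h1
  have hspec := Nat.find_spec hex
  have hK0 : Nat.find hex ≠ 0 := fun h => by rw [h] at hspec; omega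
  refine ⟨Nat.find hex - 1, by omega, ?_⟩
  have hmin : ¬ 0 < d (Nat.find hex - 1) := Nat.find_min hex (by omega)
  have hs := hstep (Nat.find hex - 1)
  rw [Nat.sub_add_cancel (by omega)] at hs
  omega

lemma pos_of_ne (d : ℕ → ℤ) (hstep : ∀ k, d (k + 1) ≤ d k + 1 ∧ d k ≤ d (k + 1) + 1)
    (m : ℕ) (h0 : 0 < d 0) (hne : ∀ k ≤ m, d k ≠ 0) : ∀ k ≤ m, 0 < d k := by
  intro k
  induction k with
  | zero => exact fun _ => h0
  | succ k ih =>
    intro hk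
    have h1 := ih (by omega)
    have h2 := hstep k
    have h3 := hne (k + 1) hk
    omega

lemma path_step (σ : Equiv.Perm (Fin a)) (w : Fin n → Fin a) (i j : Fin a) (k : ℕ) :
    ((path σ w (k + 1) j : ℤ) - path σ w (k + 1) i) ≤ ((path σ w k j : ℤ) - path σ w k i) + 1 ∧
    ((path σ w k j : ℤ) - path σ w k i) ≤ ((path σ w (k + 1) j : ℤ) - path σ w (k + 1) i) + 1 := by
  have h1 := cnt_mono w i (by omega : k ≤ k + 1)
  have h2 := cnt_mono w j (by omega : k ≤ k + 1)
  have h3 := cnt_succ_le w i k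
  have h4 := cnt_succ_le w j k
  unfold path
  push_cast
  omega

def coll (σ : Equiv.Perm (Fin a)) (w : Fin n → Fin a) (k : ℕ) : Prop :=
  ∃ i j : Fin a, i ≠ j ∧ path σ w k i = path σ w k j

instance (σ : Equiv.Perm (Fin a)) (w : Fin n → Fin a) (k : ℕ) : Decidable (coll σ w k) := by
  unfold coll; infer_instance

def IsBad (σ : Equiv.Perm (Fin a)) (w : Fin n → Fin a) : Prop :=
  ∃ k ≤ n, coll σ w k

instance (σ : Equiv.Perm (Fin a)) (w : Fin n → Fin a) : Decidable (IsBad σ w) := by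
  unfold IsBad; infer_instance

/-- if two walkers start on opposite order from their final order, they collide -/
lemma collides (σ : Equiv.Perm (Fin a)) (w : Fin n → Fin a) (i j : Fin a)
    (h0 : path σ w 0 j ≤ path σ w 0 i) (h1 : path σ w n i < path σ w n j) (hij : i ≠ j) :
    IsBad σ w := by
  rcases eq_or_lt_of_le h0 with heq | hlt
  · exact ⟨0, Nat.zero_le n, j, i, hij.symm, heq⟩
  · obtain ⟨k, hk, hzero⟩ := ivt (fun k => (path σ w k j : ℤ) - path σ w k i)
      (fun k => path_step σ w i j k) n (by push_cast; omega) (by push_cast; omega)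
    refine ⟨k, hk, i, j, hij, ?_⟩
    omega


lemma perm_eq_one_of_strictMono (σ : Equiv.Perm (Fin a))
    (h : StrictMono (σ : Fin a → Fin a)) : σ = 1 := by
  have h1 := Finset.orderEmbOfFin_unique (s := (univ : Finset (Fin a)))
    (Finset.card_fin a) (f := (σ : Fin a → Fin a)) (fun x => mem_univ _) h
  have h2 := Finset.orderEmbOfFin_unique (s := (univ : Finset (Fin a)))
    (Finset.card_fin a) (f := fun x : Fin a => x) (fun x => mem_univ _) strictMono_id
  apply Equiv.ext
  intro x
  rw [Equiv.Perm.one_apply]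
  have e1 := congrFun h1 x
  have e2 := congrFun h2 x
  exact e1.trans e2.symm

def Ballot (b : ℕ) (w : Fin n → Fin a) : Prop :=
  (∀ i, cnt w i n = b) ∧ ∀ k ≤ n, ∀ i j : Fin a, i ≤ j → cnt w i k ≤ cnt w j k

instance (b : ℕ) (w : Fin n → Fin a) : Decidable (Ballot b w) := by
  unfold Ballot; infer_instance

/-- chain adjacent inequalities -/
lemma ballot_of_adjacent (w : Fin n → Fin a)
    (h : ∀ i j : Fin a, (j : ℕ) = (i : ℕ) + 1 → ∀ k ≤ n, cnt w i k ≤ cnt w j k) :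
    ∀ i j : Fin a, i ≤ j → ∀ k ≤ n, cnt w i k ≤ cnt w j k := by
  have key : ∀ g : ℕ, ∀ i j : Fin a, (j : ℕ) = (i : ℕ) + g → ∀ k ≤ n, cnt w i k ≤ cnt w j k := by
    intro g
    induction g with
    | zero =>
      intro i j hij k hk
      have : i = j := Fin.ext (by omega)
      rw [this]
    | succ g ih =>
      intro i j hij k hk
      have hlt : (i : ℕ) + g < a := by have := j.isLt; omega
      exact le_trans (ih i ⟨(i : ℕ) + g, hlt⟩ rfl k hk)
        (h ⟨(i : ℕ) + g, hlt⟩ j (by show (j : ℕ) = (i : ℕ) + g + 1; omega) k hk)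
  intro i j hij k hk
  exact key ((j : ℕ) - (i : ℕ)) i j (by omega) k hk

/-- good pairs in P are exactly identity + ballot words -/
lemma good_char {b : ℕ} (σ : Equiv.Perm (Fin a)) (w : Fin n → Fin a)
    (hP : ∀ i, path σ w n i = b + (i : ℕ)) (hgood : ¬ IsBad σ w) :
    σ = 1 ∧ Ballot b w := by
  have hnc : ∀ k ≤ n, ∀ i j : Fin a, i ≠ j → path σ w k i ≠ path σ w k j := by
    intro k hk i j hij heq
    exact hgood ⟨k, hk, i, j, hij, heq⟩
  have hσ : σ = 1 := by
    apply perm_eq_one_of_strictMono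
    intro i j hij
    -- difference d k = path k j - path k i never zero, positive at n
    by_contra hle
    push_neg at hle
    have hij' : i ≠ j := ne_of_lt hij
    have h0 : path σ w 0 j ≤ path σ w 0 i := by
      unfold path
      rw [cnt_zero, cnt_zero]
      have : (σ j : ℕ) ≤ σ i := by exact_mod_cast hle
      omega
    have h1 : path σ w n i < path σ w n j := by
      rw [hP i, hP j]
      have : (i : ℕ) < j := hij
      omega
    exact hgood (collides σ w i j h0 h1 hij')
  subst hσ
  have hfib : ∀ i, cnt w i n = b := by
    intro i
    have := hP i
    unfold path at this
    simp only [Equiv.Perm.coe_one, id_eq] at this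
    omega
  refine ⟨rfl, hfib, ?_⟩
  intro k₀ hk₀ i₀ j₀ hij₀
  refine ballot_of_adjacent w ?_ i₀ j₀ hij₀ k₀ hk₀
  intro i j hij k hk
  -- positivity of d k = path k j - path k i for all k ≤ n
  have hd : ∀ k ≤ n, 0 < (path 1 w k j : ℤ) - path 1 w k i := by
    apply pos_of_ne (fun k => (path 1 w k j : ℤ) - path 1 w k i)
      (fun k => path_step 1 w i j k)
    · unfold path
      rw [cnt_zero, cnt_zero]
      simp only [Equiv.Perm.coe_one, id_eq]
      push_cast
      omega
    · intro k hk hzero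
      refine hnc k hk j i (fun h => by rw [h] at hij; omega) ?_
      omega
  have := hd k hk
  unfold path at this
  simp only [Equiv.Perm.coe_one, id_eq] at this
  push_cast at this
  omega

lemma ballot_good {b : ℕ} (w : Fin n → Fin a) (hw : Ballot b w) :
    (∀ i : Fin a, path 1 w n i = b + (i : ℕ)) ∧ ¬ IsBad (1 : Equiv.Perm (Fin a)) w := by
  constructor
  · intro i
    unfold path
    simp only [Equiv.Perm.coe_one, id_eq]
    rw [hw.1 i]
    omega
  · rintro ⟨k, hk, i, j, hij, heq⟩
    unfold path at heq
    simp only [Equiv.Perm.coe_one, id_eq] at heq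
    rcases lt_or_gt_of_ne hij with h | h
    · have := hw.2 k hk i j (le_of_lt h)
      have : (i : ℕ) < j := h
      omega
    · have := hw.2 k hk j i (le_of_lt h)
      have : (j : ℕ) < i := h
      omega


section Involution

lemma min'_congr {α : Type*} [LinearOrder α] {s t : Finset α} (hs : s.Nonempty)
    (ht : t.Nonempty) (h : s = t) : s.min' hs = t.min' ht := by subst h; rfl

variable (σ : Equiv.Perm (Fin a)) (w : Fin n → Fin a)

/-- generic swap-prefix lemmas -/
lemma cnt_swap_le (i j : Fin a) (K : ℕ) {k : ℕ} (hk : k ≤ K) (l : Fin a) :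
    cnt (fun v => if (v : ℕ) < K then Equiv.swap i j (w v) else w v) l k
      = cnt w (Equiv.swap i j l) k := by
  set w' : Fin n → Fin a := fun v => if (v : ℕ) < K then Equiv.swap i j (w v) else w v with hw'
  unfold cnt
  congr 1
  apply filter_congr
  intro v _
  have hv : w' v = if (v : ℕ) < K then Equiv.swap i j (w v) else w v := rfl
  constructor
  · rintro ⟨h1, h2⟩
    rw [hv, if_pos (show (v : ℕ) < K by omega)] at h2
    refine ⟨h1, ?_⟩
    rw [← h2, Equiv.swap_apply_self]
  · rintro ⟨h1, h2⟩
    refine ⟨h1, ?_⟩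
    rw [hv, if_pos (show (v : ℕ) < K by omega), h2, Equiv.swap_apply_self]

lemma cnt_swap_ge (i j : Fin a) (K : ℕ) {k : ℕ} (hk : K ≤ k) (l : Fin a) :
    cnt (fun v => if (v : ℕ) < K then Equiv.swap i j (w v) else w v) l k + cnt w l K
      = cnt w (Equiv.swap i j l) K + cnt w l k := by
  set w' : Fin n → Fin a := fun v => if (v : ℕ) < K then Equiv.swap i j (w v) else w v with hw'
  have h1 : cnt w' l k = cnt w' l K +
      (Finset.univ.filter fun v : Fin n => K ≤ (v : ℕ) ∧ (v : ℕ) < k ∧ w' v = l).card :=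
    cnt_split w' l hk
  have h2 : cnt w l k = cnt w l K +
      (Finset.univ.filter fun v : Fin n => K ≤ (v : ℕ) ∧ (v : ℕ) < k ∧ w v = l).card :=
    cnt_split w l hk
  have h3 : cnt w' l K = cnt w (Equiv.swap i j l) K := cnt_swap_le w i j K le_rfl l
  have h4 : (Finset.univ.filter fun v : Fin n => K ≤ (v : ℕ) ∧ (v : ℕ) < k ∧ w' v = l) =
      (Finset.univ.filter fun v : Fin n => K ≤ (v : ℕ) ∧ (v : ℕ) < k ∧ w v = l) := by
    apply filter_congr
    intro v _
    constructor
    · rintro ⟨ha, hb, hc⟩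
      rw [show w' v = if (v : ℕ) < K then Equiv.swap i j (w v) else w v from rfl,
        if_neg (show ¬ (v : ℕ) < K by omega)] at hc
      exact ⟨ha, hb, hc⟩
    · rintro ⟨ha, hb, hc⟩
      refine ⟨ha, hb, ?_⟩
      rw [show w' v = if (v : ℕ) < K then Equiv.swap i j (w v) else w v from rfl,
        if_neg (show ¬ (v : ℕ) < K by omega)]
      exact hc
  have h5 := congrArg Finset.card h4
  omega

lemma path_swap_le (i j : Fin a) (K : ℕ) {k : ℕ} (hk : k ≤ K) (l : Fin a) :
    path (σ * Equiv.swap i j) (fun v => if (v : ℕ) < K then Equiv.swap i j (w v) else w v) k l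
      = path σ w k (Equiv.swap i j l) := by
  unfold path
  rw [cnt_swap_le w i j K hk l, Equiv.Perm.mul_apply]

lemma path_swap_ge (i j : Fin a) (K : ℕ)
    (hcol : path σ w K i = path σ w K j) {k : ℕ} (hk : K ≤ k) (l : Fin a) :
    path (σ * Equiv.swap i j) (fun v => if (v : ℕ) < K then Equiv.swap i j (w v) else w v) k l
      = path σ w k l := by
  have hτ : path σ w K (Equiv.swap i j l) = path σ w K l := by
    by_cases hl : l = i
    · rw [hl, Equiv.swap_apply_left]; exact hcol.symm
    by_cases hl' : l = j
    · rw [hl', Equiv.swap_apply_right]; exact hcol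
    · rw [Equiv.swap_apply_of_ne_of_ne hl hl']
  have h2 := cnt_swap_ge w i j K hk l
  unfold path at *
  rw [Equiv.Perm.mul_apply]
  omega

variable {σ w} (h : IsBad σ w)

def badK : ℕ := Nat.find (p := fun k => k ≤ n ∧ coll σ w k) h

lemma badK_le : badK h ≤ n := (Nat.find_spec (p := fun k => k ≤ n ∧ coll σ w k) h).1

lemma badK_coll : coll σ w (badK h) := (Nat.find_spec (p := fun k => k ≤ n ∧ coll σ w k) h).2

def cset : Finset (Fin a × Fin a) :=
  univ.filter fun q => q.1 ≠ q.2 ∧ path σ w (badK h) q.1 = path σ w (badK h) q.2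

lemma cset_nonempty : (cset h).Nonempty := by
  obtain ⟨i, j, hij, he⟩ := badK_coll h
  exact ⟨(i, j), by simp [cset, hij, he]⟩

def badI : Fin a := ((cset h).image Prod.fst).min' ((cset_nonempty h).image _)

lemma badI_filter_nonempty :
    (((cset h).filter fun q => q.1 = badI h).image Prod.snd).Nonempty := by
  have hm := Finset.min'_mem ((cset h).image Prod.fst) ((cset_nonempty h).image _)
  rw [Finset.mem_image] at hm
  obtain ⟨q, hq, hq1⟩ := hm
  exact ⟨q.2, Finset.mem_image_of_mem _ (mem_filter.mpr ⟨hq, hq1⟩)⟩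

def badJ : Fin a := (((cset h).filter fun q => q.1 = badI h).image Prod.snd).min'
  (badI_filter_nonempty h)

lemma badIJ_mem : (badI h, badJ h) ∈ cset h := by
  have hm := Finset.min'_mem _ (badI_filter_nonempty h)
  rw [Finset.mem_image] at hm
  obtain ⟨q, hq, hq2⟩ := hm
  rw [mem_filter] at hq
  have : q = (badI h, badJ h) := Prod.ext hq.2 hq2
  rw [← this]
  exact hq.1

lemma badIJ_ne : badI h ≠ badJ h := by
  have := badIJ_mem h
  simp only [cset, mem_filter] at this
  exact this.2.1

lemma badIJ_path : path σ w (badK h) (badI h) = path σ w (badK h) (badJ h) := by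
  have := badIJ_mem h
  simp only [cset, mem_filter] at this
  exact this.2.2

def flipσ : Equiv.Perm (Fin a) := σ * Equiv.swap (badI h) (badJ h)

def flipw : Fin n → Fin a :=
  fun v => if (v : ℕ) < badK h then Equiv.swap (badI h) (badJ h) (w v) else w v

lemma flipw_eq : flipw h = fun v : Fin n =>
    if (v : ℕ) < badK h then Equiv.swap (badI h) (badJ h) (w v) else w v := rfl

lemma flipσ_eq : flipσ h = σ * Equiv.swap (badI h) (badJ h) := rfl

lemma coll_flip_iff (k : ℕ) : coll (flipσ h) (flipw h) k ↔ coll σ w k := by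
  rcases le_or_gt k (badK h) with hk | hk
  · unfold coll
    rw [flipw_eq, flipσ_eq]
    constructor
    · rintro ⟨i', j', hne, he⟩
      rw [path_swap_le σ w _ _ _ hk, path_swap_le σ w _ _ _ hk] at he
      exact ⟨_, _, fun hh => hne (Equiv.injective _ hh), he⟩
    · rintro ⟨i', j', hne, he⟩
      refine ⟨Equiv.swap (badI h) (badJ h) i', Equiv.swap (badI h) (badJ h) j',
        fun hh => hne (Equiv.injective _ hh), ?_⟩
      rw [path_swap_le σ w _ _ _ hk, path_swap_le σ w _ _ _ hk,
        Equiv.swap_apply_self, Equiv.swap_apply_self]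
      exact he
  · unfold coll
    have hp : ∀ l, path (flipσ h) (flipw h) k l = path σ w k l :=
      fun l => path_swap_ge σ w _ _ _ (badIJ_path h) (le_of_lt hk) l
    constructor
    · rintro ⟨i', j', hne, he⟩
      exact ⟨i', j', hne, by rw [← hp i', ← hp j']; exact he⟩
    · rintro ⟨i', j', hne, he⟩
      exact ⟨i', j', hne, by rw [hp i', hp j']; exact he⟩

lemma flip_bad : IsBad (flipσ h) (flipw h) :=
  ⟨badK h, badK_le h, (coll_flip_iff h _).mpr (badK_coll h)⟩

lemma badK_flip (h' : IsBad (flipσ h) (flipw h)) : badK h' = badK h := by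
  apply le_antisymm
  · exact Nat.find_min' (p := fun k => k ≤ n ∧ coll (flipσ h) (flipw h) k) h'
      ⟨badK_le h, (coll_flip_iff h _).mpr (badK_coll h)⟩
  · exact Nat.find_min' (p := fun k => k ≤ n ∧ coll σ w k) h
      ⟨badK_le h', (coll_flip_iff h _).mp (badK_coll h')⟩

lemma path_flip_K (l : Fin a) :
    path (flipσ h) (flipw h) (badK h) l = path σ w (badK h) l :=
  path_swap_ge σ w _ _ _ (badIJ_path h) le_rfl l

lemma cset_flip (h' : IsBad (flipσ h) (flipw h)) : cset h' = cset h := by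
  unfold cset
  ext q
  simp only [mem_filter, mem_univ, true_and, badK_flip h h', path_flip_K h]

lemma badI_flip (h' : IsBad (flipσ h) (flipw h)) : badI h' = badI h :=
  min'_congr _ _ (congrArg (Finset.image Prod.fst) (cset_flip h h'))

lemma badJ_flip (h' : IsBad (flipσ h) (flipw h)) : badJ h' = badJ h :=
  min'_congr _ _ (by rw [cset_flip h h', badI_flip h h'])

lemma flip_flip (h' : IsBad (flipσ h) (flipw h)) :
    flipσ h' = σ ∧ flipw h' = w := by
  constructor
  · rw [flipσ_eq h', badI_flip h h', badJ_flip h h']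
    show (σ * Equiv.swap (badI h) (badJ h)) * Equiv.swap (badI h) (badJ h) = σ
    rw [mul_assoc, Equiv.swap_mul_self, mul_one]
  · funext v
    show (if (v : ℕ) < badK h' then Equiv.swap (badI h') (badJ h') (flipw h v) else flipw h v) = w v
    rw [badK_flip h h', badI_flip h h', badJ_flip h h']
    unfold flipw
    split_ifs with hv
    · exact Equiv.swap_apply_self _ _ _
    · rfl

lemma flip_sign : Equiv.Perm.sign (flipσ h) = - Equiv.Perm.sign σ := by
  unfold flipσ
  rw [Equiv.Perm.sign_mul, Equiv.Perm.sign_swap (badIJ_ne h), mul_neg, mul_one]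

lemma flip_ne : flipσ h ≠ σ := by
  unfold flipσ
  rw [Ne, mul_eq_left, Equiv.swap_eq_one_iff]
  exact badIJ_ne h

lemma flip_mem {b : ℕ} (hP : ∀ i : Fin a, path σ w n i = b + (i : ℕ)) :
    ∀ i : Fin a, path (flipσ h) (flipw h) n i = b + (i : ℕ) :=
  fun i => (path_swap_ge σ w _ _ _ (badIJ_path h) (badK_le h) i).trans (hP i)

lemma reflection (b : ℕ) :
    ∑ p ∈ (univ.filter fun p : Equiv.Perm (Fin a) × (Fin n → Fin a) =>
        ∀ i, path p.1 p.2 n i = b + (i : ℕ)), ((Equiv.Perm.sign p.1 : ℤ))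
      = ((univ.filter fun w : Fin n → Fin a => Ballot b w).card : ℤ) := by
  classical
  set P := univ.filter fun p : Equiv.Perm (Fin a) × (Fin n → Fin a) =>
      ∀ i, path p.1 p.2 n i = b + (i : ℕ) with hP
  rw [← Finset.sum_filter_add_sum_filter_not P (fun p => IsBad p.1 p.2)]
  have hbad : ∑ p ∈ P.filter (fun p => IsBad p.1 p.2), ((Equiv.Perm.sign p.1 : ℤ)) = 0 := by
    apply Finset.sum_involution
      (g := fun p hp => ((flipσ ((mem_filter.mp hp).2), flipw ((mem_filter.mp hp).2)) :
        Equiv.Perm (Fin a) × (Fin n → Fin a)))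
    · intro p hp
      have hs := flip_sign ((mem_filter.mp hp).2)
      have : ((Equiv.Perm.sign (flipσ ((mem_filter.mp hp).2))) : ℤ)
          = -((Equiv.Perm.sign p.1 : ℤ)) := by
        rw [hs]; push_cast; ring
      rw [this]; ring
    · intro p hp _
      intro he
      exact flip_ne ((mem_filter.mp hp).2) (congrArg Prod.fst he)
    · intro p hp
      have hb := (mem_filter.mp hp).2
      apply Prod.ext
      · exact (flip_flip hb _).1
      · exact (flip_flip hb _).2
    · intro p hp
      rw [mem_filter]
      have hPm := (mem_filter.mp hp).1
      rw [hP, mem_filter] at hPm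
      refine ⟨?_, flip_bad _⟩
      exact mem_filter.mpr ⟨mem_univ _, flip_mem _ hPm.2⟩
  rw [hbad, zero_add]
  have hgood : P.filter (fun p => ¬ IsBad p.1 p.2)
      = (univ.filter fun w : Fin n → Fin a => Ballot b w).image
        (fun w => ((1 : Equiv.Perm (Fin a)), w)) := by
    ext p
    simp only [mem_filter, mem_image, mem_univ, true_and, hP]
    constructor
    · rintro ⟨hPm, hg⟩
      obtain ⟨hσ, hballot⟩ := good_char p.1 p.2 hPm hg
      exact ⟨p.2, hballot, by rw [← hσ]⟩
    · rintro ⟨w, hw, rfl⟩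
      exact ⟨(ballot_good w hw).1, (ballot_good w hw).2⟩
  rw [hgood, Finset.sum_image (fun x _ y _ he => (Prod.ext_iff.mp he).2)]
  simp [Equiv.Perm.sign_one]

end Involution

end B


variable {n a : ℕ}

lemma cnt_n (w : Fin n → Fin a) (i : Fin a) :
    cnt w i n = (Finset.univ.filter fun v : Fin n => w v = i).card := by
  unfold cnt; congr 1; apply filter_congr; intro v _; simp [v.isLt]

lemma sum_cnt_n (w : Fin n → Fin a) : ∑ i, cnt w i n = n := by
  simp only [cnt_n]
  have := Finset.card_eq_sum_card_fiberwise (f := w) (t := Finset.univ)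
    (fun v (_ : v ∈ Finset.univ) => mem_univ (w v))
  simpa using this.symm

/-- the cast equiv between the fiber of `Sigma.fst` and its fiber type -/
def fiberCast (m : Fin a → ℕ) (i : Fin a) :
    {x : Σ j : Fin a, Fin (m j) // x.1 = i} ≃ Fin (m i) where
  toFun x := Fin.cast (congrArg m x.2) x.1.2
  invFun y := ⟨⟨i, y⟩, rfl⟩
  left_inv := by rintro ⟨⟨j, x⟩, rfl⟩; rfl
  right_inv := by intro x; rfl

/-- decomposition of an equiv into a word plus fiber equivs -/
def wordEquiv (m : Fin a → ℕ) :
    (Fin n ≃ Σ i : Fin a, Fin (m i)) ≃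
      (Σ w : Fin n → Fin a, Π i, {v : Fin n // w v = i} ≃ Fin (m i)) where
  toFun e := ⟨fun v => (e v).1, fun i =>
    (Equiv.subtypeEquiv e (fun v => Iff.rfl)).trans (fiberCast m i)⟩
  invFun p := (Equiv.sigmaFiberEquiv p.1).symm.trans (Equiv.sigmaCongrRight p.2)
  left_inv := fun e => Equiv.ext fun v => rfl
  right_inv := by
    rintro ⟨w, f⟩
    show (⟨w, _⟩ : Σ w : Fin n → Fin a, Π i, {v : Fin n // w v = i} ≃ Fin (m i)) = ⟨w, f⟩
    refine congrArg (Sigma.mk w) ?_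
    funext i
    apply Equiv.ext
    rintro ⟨v, hv⟩
    show Fin.cast (congrArg m hv) (f (w v) ⟨v, rfl⟩) = f i ⟨v, hv⟩
    subst hv
    rfl

lemma card_equiv_fin (α : Type*) [Fintype α] [DecidableEq α] (m : ℕ) :
    Fintype.card (α ≃ Fin m) = if Fintype.card α = m then m.factorial else 0 := by
  split_ifs with h
  · rw [Fintype.card_equiv (Fintype.equivFinOfCardEq h)]; exact congrArg Nat.factorial h
  · rw [Fintype.card_eq_zero_iff]
    exact ⟨fun e => h (by simpa using Fintype.card_congr e)⟩

/-- Counting words with prescribed letter multiplicities. -/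
lemma card_words_mul (m : Fin a → ℕ) (hm : ∑ i, m i = n) :
    (Finset.univ.filter fun w : Fin n → Fin a => ∀ i, cnt w i n = m i).card *
      ∏ i, (m i).factorial = n.factorial := by
  classical
  have h1 : Fintype.card (Fin n ≃ Σ i : Fin a, Fin (m i)) = n.factorial := by
    rw [Fintype.card_equiv ((Fintype.equivFinOfCardEq (by simp [hm])).symm.symm).symm]
    simp
  have h2 := Fintype.card_congr (wordEquiv (n := n) m)
  rw [h1, Fintype.card_sigma] at h2
  rw [h2]
  have h3 : ∀ w : Fin n → Fin a,
      Fintype.card (Π i, {v : Fin n // w v = i} ≃ Fin (m i)) =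
        if (∀ i, cnt w i n = m i) then ∏ i, (m i).factorial else 0 := by
    intro w
    rw [Fintype.card_pi]
    split_ifs with h
    · refine Finset.prod_congr rfl fun i _ => ?_
      rw [card_equiv_fin, if_pos]
      rw [Fintype.card_subtype, ← cnt_n, h i]
    · push_neg at h
      obtain ⟨i, hi⟩ := h
      apply Finset.prod_eq_zero (mem_univ i)
      rw [card_equiv_fin, if_neg]
      rw [Fintype.card_subtype, ← cnt_n]
      exact hi
  rw [Finset.sum_congr rfl fun w _ => h3 w, Finset.sum_ite, Finset.sum_const_zero,
    Finset.sum_const, add_zero, smul_eq_mul]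




section C

lemma card_filter_lt_fin (b : ℕ) (j : Fin b) :
    ((univ : Finset (Fin b)).filter fun j' => j' < j).card = (j : ℕ) := by
  have : ((univ : Finset (Fin b)).filter fun j' => j' < j) = Finset.Iio j := by
    ext v; simp [Finset.mem_Iio]
  rw [this]
  exact Fin.card_Iio j

variable {N b : ℕ}

lemma filter_lt_orderEmb (s : Finset (Fin N)) (h : s.card = b) (j : Fin b) :
    s.filter (fun v => v < s.orderEmbOfFin h j)
      = (univ.filter fun j' => j' < j).image (s.orderEmbOfFin h) := by
  ext v
  simp only [mem_filter, mem_image, mem_univ, true_and]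
  constructor
  · rintro ⟨hvs, hvlt⟩
    have : v ∈ Set.range (s.orderEmbOfFin h) := by
      rw [Finset.range_orderEmbOfFin]; exact hvs
    obtain ⟨j', hj'⟩ := this
    refine ⟨j', ?_, hj'⟩
    have := hvlt
    rw [← hj'] at this
    exact (OrderEmbedding.lt_iff_lt _).mp this
  · rintro ⟨j', hj'lt, rfl⟩
    exact ⟨Finset.orderEmbOfFin_mem s h j', (OrderEmbedding.lt_iff_lt _).mpr hj'lt⟩

lemma card_lt_orderEmb (s : Finset (Fin N)) (h : s.card = b) (j : Fin b) :
    (s.filter fun v => v < s.orderEmbOfFin h j).card = (j : ℕ) := by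
  rw [filter_lt_orderEmb s h j,
    Finset.card_image_of_injective _ (s.orderEmbOfFin h).injective,
    card_filter_lt_fin b j]

lemma card_le_orderEmb (s : Finset (Fin N)) (h : s.card = b) (j : Fin b) :
    (s.filter fun v => v ≤ s.orderEmbOfFin h j).card = (j : ℕ) + 1 := by
  have hins : s.filter (fun v => v ≤ s.orderEmbOfFin h j)
      = insert (s.orderEmbOfFin h j) (s.filter fun v => v < s.orderEmbOfFin h j) := by
    ext v
    simp only [mem_filter, mem_insert]
    constructor
    · rintro ⟨hvs, hvle⟩
      rcases eq_or_lt_of_le hvle with he | hl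
      · exact Or.inl he
      · exact Or.inr ⟨hvs, hl⟩
    · rintro (rfl | ⟨hvs, hl⟩)
      · exact ⟨Finset.orderEmbOfFin_mem s h j, le_refl _⟩
      · exact ⟨hvs, le_of_lt hl⟩
  rw [hins, Finset.card_insert_of_notMem (by simp), card_lt_orderEmb s h j]

lemma le_orderEmb_of_card_le (s : Finset (Fin N)) (h : s.card = b) (j : Fin b) (u : Fin N)
    (hcard : (j : ℕ) + 1 ≤ (s.filter fun v => v ≤ u).card) : s.orderEmbOfFin h j ≤ u := by
  by_contra hlt
  push_neg at hlt
  have hsub : s.filter (fun v => v ≤ u) ⊆ s.filter (fun v => v < s.orderEmbOfFin h j) := by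
    intro v hv
    rw [mem_filter] at *
    exact ⟨hv.1, lt_of_le_of_lt hv.2 hlt⟩
  have := card_le_card hsub
  rw [card_lt_orderEmb s h j] at this
  omega

/-- chain adjacent strict inequalities into StrictMono on Fin -/
lemma strictMono_of_adjacent {α : Type*} [Preorder α] (f : Fin a → α)
    (hadj : ∀ i i' : Fin a, (i' : ℕ) = (i : ℕ) + 1 → f i < f i') : StrictMono f := by
  have key : ∀ g : ℕ, ∀ i i' : Fin a, 0 < g → (i' : ℕ) = (i : ℕ) + g → f i < f i' := by
    intro g
    induction g with
    | zero => omega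
    | succ g ih =>
      intro i i' _ hii'
      rcases Nat.eq_zero_or_pos g with rfl | hg
      · exact hadj i i' (by omega)
      · have hlt : (i : ℕ) + g < a := by have := i'.isLt; omega
        exact lt_trans (ih i ⟨(i : ℕ) + g, hlt⟩ hg rfl) (hadj ⟨(i : ℕ) + g, hlt⟩ i' (by simp; omega))
  intro i j hij
  exact key ((j : ℕ) - (i : ℕ)) i j (by omega) (by omega)


section Bij

variable {a b : ℕ}

def SYTP (a b : ℕ) (T : Fin a × Fin b → Fin (a * b)) : Prop :=
  Function.Bijective T ∧ (∀ j : Fin b, StrictMono (fun i => T (i, j))) ∧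
    (∀ i : Fin a, StrictMono (fun j => T (i, j)))

noncomputable def sytWord (T : Fin a × Fin b → Fin (a * b)) (hT : Function.Bijective T) :
    Fin (a * b) → Fin a :=
  fun v => Fin.rev (((Equiv.ofBijective T hT).symm v).1)

lemma sytWord_apply_T (T : Fin a × Fin b → Fin (a * b)) (hT : Function.Bijective T)
    (p : Fin a × Fin b) : sytWord T hT (T p) = Fin.rev p.1 := by
  unfold sytWord
  congr 1
  have : (Equiv.ofBijective T hT).symm (T p) = p := (Equiv.ofBijective T hT).symm_apply_apply p
  rw [this]

lemma T_symm_eq (T : Fin a × Fin b → Fin (a * b)) (hT : Function.Bijective T)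
    (v : Fin (a * b)) : T ((Equiv.ofBijective T hT).symm v) = v :=
  (Equiv.ofBijective T hT).apply_symm_apply v

lemma cnt_sytWord (T : Fin a × Fin b → Fin (a * b)) (hT : Function.Bijective T)
    (l : Fin a) (k : ℕ) :
    cnt (sytWord T hT) l k = (univ.filter fun j : Fin b => (T (Fin.rev l, j) : ℕ) < k).card := by
  set e := Equiv.ofBijective T hT with he
  apply Finset.card_bij' (fun v _ => (e.symm v).2) (fun j _ => T (Fin.rev l, j))
  · -- hi
    intro v hv
    rw [mem_filter] at hv
    obtain ⟨-, hvk, hvl⟩ := hv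
    have h1 : (e.symm v).1 = Fin.rev l := by
      unfold sytWord at hvl
      rw [← hvl, Fin.rev_rev]
    rw [mem_filter]
    refine ⟨mem_univ _, ?_⟩
    have h2 : T (Fin.rev l, (e.symm v).2) = v := by
      rw [← h1]
      have heta : ((e.symm v).1, (e.symm v).2) = e.symm v := rfl
      rw [heta]
      exact T_symm_eq T hT v
    rw [h2]
    exact hvk
  · -- hj
    intro j hj
    rw [mem_filter] at hj
    rw [mem_filter]
    refine ⟨mem_univ _, hj.2, ?_⟩
    rw [sytWord_apply_T T hT (Fin.rev l, j)]
    exact Fin.rev_rev l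
  · -- left_inv
    intro v hv
    rw [mem_filter] at hv
    have h1 : (e.symm v).1 = Fin.rev l := by
      have := hv.2.2
      unfold sytWord at this
      rw [← this, Fin.rev_rev]
    rw [← h1]
    have heta : ((e.symm v).1, (e.symm v).2) = e.symm v := rfl
    rw [heta]
    exact T_symm_eq T hT v
  · -- right_inv
    intro j hj
    have : e.symm (T (Fin.rev l, j)) = (Fin.rev l, j) := e.symm_apply_apply (Fin.rev l, j)
    rw [this]

lemma syt_ballot (T : Fin a × Fin b → Fin (a * b)) (hT : SYTP a b T) :
    Ballot b (sytWord T hT.1) := by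
  constructor
  · intro l
    rw [cnt_sytWord]
    rw [Finset.filter_true_of_mem (fun j _ => (T (Fin.rev l, j)).isLt)]
    simp
  · intro k hk l l' hll'
    rw [cnt_sytWord, cnt_sytWord]
    apply card_le_card
    intro j hj
    rw [mem_filter] at *
    refine ⟨mem_univ _, lt_of_le_of_lt ?_ hj.2⟩
    have hrev : Fin.rev l' ≤ Fin.rev l := by
      rw [Fin.rev_le_rev]
      exact hll'
    exact (hT.2.1 j).monotone hrev

/-- fibers of a ballot word -/
def wFiber (w : Fin (a * b) → Fin a) (i : Fin a) : Finset (Fin (a * b)) :=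
  univ.filter fun v => w v = Fin.rev i

lemma wFiber_card (w : Fin (a * b) → Fin a) (hw : Ballot b w) (i : Fin a) :
    (wFiber w i).card = b := by
  have := hw.1 (Fin.rev i)
  rw [cnt_n] at this
  exact this

def ballotT (w : Fin (a * b) → Fin a) (hw : Ballot b w) : Fin a × Fin b → Fin (a * b) :=
  fun p => (wFiber w p.1).orderEmbOfFin (wFiber_card w hw p.1) p.2

lemma ballotT_mem (w : Fin (a * b) → Fin a) (hw : Ballot b w) (p : Fin a × Fin b) :
    w (ballotT w hw p) = Fin.rev p.1 := by
  have h := Finset.orderEmbOfFin_mem (wFiber w p.1) (wFiber_card w hw p.1) p.2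
  unfold wFiber at h
  rw [mem_filter] at h
  exact h.2

lemma cnt_le_fiber (w : Fin (a * b) → Fin a) (i : Fin a) (u : Fin (a * b)) :
    cnt w (Fin.rev i) ((u : ℕ) + 1) = ((wFiber w i).filter fun v => v ≤ u).card := by
  unfold cnt wFiber
  rw [Finset.filter_filter]
  congr 1
  apply filter_congr
  intro v _
  constructor
  · rintro ⟨h1, h2⟩
    exact ⟨h2, by rw [Fin.le_def]; omega⟩
  · rintro ⟨h1, h2⟩
    rw [Fin.le_def] at h2
    exact ⟨by omega, h1⟩

lemma ballotT_syt (w : Fin (a * b) → Fin a) (hw : Ballot b w) : SYTP a b (ballotT w hw) := by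
  have hinj : Function.Injective (ballotT w hw) := by
    intro p q hpq
    have h1 : Fin.rev p.1 = Fin.rev q.1 := by
      rw [← ballotT_mem w hw p, ← ballotT_mem w hw q, hpq]
    have h2 : p.1 = q.1 := Fin.rev_injective h1
    have h3 : p.2 = q.2 := by
      apply (Finset.orderEmbOfFin (wFiber w p.1) (wFiber_card w hw p.1)).injective
      show ballotT w hw p = ballotT w hw (p.1, q.2)
      rw [hpq]
      show ballotT w hw q = ballotT w hw (p.1, q.2)
      rw [show (p.1, q.2) = q from by rw [h2]]
    rw [Prod.ext_iff]
    exact ⟨h2, h3⟩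
  refine ⟨?_, ?_, ?_⟩
  · exact (Fintype.bijective_iff_injective_and_card _).mpr ⟨hinj, by simp⟩
  · -- columns strictly increasing
    intro j
    apply strictMono_of_adjacent
    intro i i' hii'
    set u := ballotT w hw (i', j) with hu
    have h1 : cnt w (Fin.rev i') ((u : ℕ) + 1) = (j : ℕ) + 1 := by
      rw [cnt_le_fiber]
      exact card_le_orderEmb _ _ j
    have h2 : cnt w (Fin.rev i') ((u : ℕ) + 1) ≤ cnt w (Fin.rev i) ((u : ℕ) + 1) := by
      apply hw.2 ((u : ℕ) + 1) u.isLt (Fin.rev i') (Fin.rev i)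
      rw [Fin.rev_le_rev]
      exact le_of_lt (by rw [Fin.lt_def]; omega)
    have h3 : cnt w (Fin.rev i) ((u : ℕ) + 1) = ((wFiber w i).filter fun v => v ≤ u).card :=
      cnt_le_fiber w i u
    have h4 : ballotT w hw (i, j) ≤ u := by
      apply le_orderEmb_of_card_le _ _ j u
      show (j : ℕ) + 1 ≤ ((wFiber w i).filter fun v => v ≤ u).card
      omega
    have h5 : ballotT w hw (i, j) ≠ u := by
      intro he
      have := ballotT_mem w hw (i, j)
      rw [he, hu, ballotT_mem w hw (i', j)] at this
      have h6 := Fin.rev_injective this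
      have h7 : ((i' : ℕ)) = ((i : ℕ)) := congrArg Fin.val h6
      omega
    exact lt_of_le_of_ne h4 h5
  · -- rows strictly increasing
    intro i
    exact fun j j' hjj' => (Finset.orderEmbOfFin _ _).strictMono hjj'

lemma round1 (T : Fin a × Fin b → Fin (a * b)) (hT : SYTP a b T) :
    ballotT (sytWord T hT.1) (syt_ballot T hT) = T := by
  funext p
  obtain ⟨i, j⟩ := p
  have hmem : ∀ j' : Fin b, T (i, j') ∈ wFiber (sytWord T hT.1) i := by
    intro j'
    unfold wFiber
    rw [mem_filter]
    refine ⟨mem_univ _, ?_⟩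
    rw [sytWord_apply_T T hT.1 (i, j')]
  have huniq := Finset.orderEmbOfFin_unique
    (wFiber_card (sytWord T hT.1) (syt_ballot T hT) i) hmem (hT.2.2 i)
  exact (congrFun huniq j).symm

lemma round2 (w : Fin (a * b) → Fin a) (hw : Ballot b w) :
    sytWord (ballotT w hw) (ballotT_syt w hw).1 = w := by
  funext v
  set i := Fin.rev (w v) with hi
  have hv : v ∈ wFiber w i := by
    unfold wFiber
    rw [mem_filter]
    exact ⟨mem_univ _, by rw [hi, Fin.rev_rev]⟩
  have hrange : v ∈ Set.range ((wFiber w i).orderEmbOfFin (wFiber_card w hw i)) := by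
    rw [Finset.range_orderEmbOfFin]
    exact hv
  obtain ⟨j, hj⟩ := hrange
  have hb : ballotT w hw (i, j) = v := hj
  rw [← hb, sytWord_apply_T _ _ (i, j), ballotT_mem w hw (i, j)]

noncomputable def sytBallotEquiv (a b : ℕ) :
    {T : Fin a × Fin b → Fin (a * b) // SYTP a b T}
      ≃ {w : Fin (a * b) → Fin a // Ballot b w} where
  toFun x := ⟨sytWord x.1 x.2.1, syt_ballot x.1 x.2⟩
  invFun y := ⟨ballotT y.1 y.2, ballotT_syt y.1 y.2⟩
  left_inv x := Subtype.ext (round1 x.1 x.2)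
  right_inv y := Subtype.ext (round2 y.1 y.2)

lemma card_syt (a b : ℕ) :
    Nat.card {T : Fin a × Fin b → Fin (a * b) // SYTP a b T}
      = (univ.filter fun w : Fin (a * b) → Fin a => Ballot b w).card := by
  rw [Nat.card_congr (sytBallotEquiv a b), Nat.card_eq_fintype_card, Fintype.card_subtype]

end Bij

end C


lemma det_descFactorial (a b : ℕ) :
    ∑ σ : Equiv.Perm (Fin a), ((Equiv.Perm.sign σ : ℤ)) *
        ∏ i : Fin a, ((b + (i : ℕ)).descFactorial ((σ i : ℕ)) : ℤ)
      = ∏ i ∈ range a, ((Nat.factorial i : ℤ)) := by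
  classical
  have h1 : ∑ σ : Equiv.Perm (Fin a), ((Equiv.Perm.sign σ : ℤ)) *
        ∏ i : Fin a, ((b + (i : ℕ)).descFactorial ((σ i : ℕ)) : ℤ)
      = (Matrix.of fun i j : Fin a => ((b + (j : ℕ)).descFactorial (i : ℕ) : ℤ)).det := by
    rw [Matrix.det_apply]
    apply Finset.sum_congr rfl
    intro σ _
    rw [Units.smul_def, zsmul_eq_mul]
    rfl
  rw [h1, ← Matrix.det_transpose]
  have h2 : (Matrix.of fun i j : Fin a => ((b + (j : ℕ)).descFactorial (i : ℕ) : ℤ)).transpose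
      = Matrix.of fun i j : Fin a =>
          ((descPochhammer ℤ (j : ℕ)).eval (((b + (i : ℕ) : ℕ) : ℤ))) := by
    ext i j
    rw [Matrix.transpose_apply, Matrix.of_apply, Matrix.of_apply]
    exact (descPochhammer_eval_eq_descFactorial ℤ (b + (i : ℕ)) (j : ℕ)).symm
  rw [h2, ← Matrix.det_eval_matrixOfPolynomials_eq_det_vandermonde
    (fun i : Fin a => ((b + (i : ℕ) : ℕ) : ℤ))
    (fun j : Fin a => descPochhammer ℤ (j : ℕ))
    (fun j => descPochhammer_natDegree ℤ _)
    (fun j => monic_descPochhammer ℤ _)]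
  cases a with
  | zero => simp
  | succ m =>
    rw [Matrix.det_vandermonde]
    have h3 : ∏ i : Fin (m + 1), ∏ j ∈ Ioi i,
          ((((b + (j : ℕ) : ℕ)) : ℤ) - ((b + (i : ℕ) : ℕ) : ℤ))
        = ∏ i : Fin (m + 1), ∏ j ∈ Ioi i, ((((j : ℕ)) : ℤ) - ((i : ℕ) : ℤ)) := by
      apply Finset.prod_congr rfl
      intro i _
      apply Finset.prod_congr rfl
      intro j _
      push_cast
      ring
    rw [h3, ← Matrix.det_vandermonde (fun i : Fin (m + 1) => (((i : ℕ) : ℤ)))]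
    have h4 := Matrix.det_vandermonde_id_eq_superFactorial (R := ℤ) m
    have h5 : (fun i : Fin (m + 1) => ((i : ℤ))) = fun i : Fin (m + 1) => (((i : ℕ) : ℤ)) := rfl
    rw [h5] at h4
    rw [h4]
    rw [← Nat.prod_range_succ_factorial m]
    push_cast
    rfl


end HLFAux

namespace HLFAux

lemma per_sigma (a b : ℕ) (σ : Equiv.Perm (Fin a)) :
    ((univ.filter fun w : Fin (a * b) → Fin a =>
        ∀ i, path σ w (a * b) i = b + (i : ℕ)).card) * ∏ i : Fin a, (b + (i : ℕ)).factorial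
      = (a * b).factorial * ∏ i : Fin a, (b + (i : ℕ)).descFactorial ((σ i : ℕ)) := by
  classical
  by_cases hfeas : ∀ i : Fin a, (σ i : ℕ) ≤ b + (i : ℕ)
  · set m : Fin a → ℕ := fun i => b + (i : ℕ) - (σ i : ℕ) with hm
    have hfilter : (univ.filter fun w : Fin (a * b) → Fin a =>
        ∀ i, path σ w (a * b) i = b + (i : ℕ))
        = univ.filter fun w : Fin (a * b) → Fin a => ∀ i, cnt w i (a * b) = m i := by
      apply filter_congr
      intro w _
      constructor
      · intro h i
        have := h i
        unfold path at this
        have := hfeas i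
        simp only [hm]
        omega
      · intro h i
        have h1 := h i
        have h2 := hfeas i
        unfold path
        simp only [hm] at h1
        omega
    have hsumm : ∑ i, m i = a * b := by
      have h1 : ∑ i : Fin a, ((σ i : ℕ)) = ∑ i : Fin a, (i : ℕ) :=
        Equiv.sum_comp σ (fun i : Fin a => (i : ℕ))
      have h3 : ∑ i, m i + ∑ i : Fin a, ((σ i : ℕ)) = ∑ i : Fin a, (b + (i : ℕ)) := by
        rw [← Finset.sum_add_distrib]
        apply Finset.sum_congr rfl
        intro i _
        have := hfeas i
        simp only [hm]
        omega
      have h4 : ∑ i : Fin a, (b + (i : ℕ)) = a * b + ∑ i : Fin a, (i : ℕ) := by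
        rw [Finset.sum_add_distrib, Finset.sum_const, card_univ, Fintype.card_fin,
          smul_eq_mul]
      omega
    have hwords := card_words_mul m hsumm
    have hfact : ∀ i : Fin a, (b + (i : ℕ)).factorial
        = (m i).factorial * (b + (i : ℕ)).descFactorial ((σ i : ℕ)) := by
      intro i
      simp only [hm]
      exact (Nat.factorial_mul_descFactorial (hfeas i)).symm
    rw [hfilter, Finset.prod_congr rfl (fun i _ => hfact i), Finset.prod_mul_distrib,
      ← mul_assoc, hwords]
  · push_neg at hfeas
    obtain ⟨i0, hi0⟩ := hfeas
    have hempty : (univ.filter fun w : Fin (a * b) → Fin a =>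
        ∀ i, path σ w (a * b) i = b + (i : ℕ)) = ∅ := by
      rw [Finset.filter_eq_empty_iff]
      intro w _
      intro h
      have := h i0
      unfold path at this
      omega
    have hdf0 : (b + (i0 : ℕ)).descFactorial ((σ i0 : ℕ)) = 0 :=
      Nat.descFactorial_eq_zero_iff_lt.mpr hi0
    have hzero : ∏ i : Fin a, (b + (i : ℕ)).descFactorial ((σ i : ℕ)) = 0 :=
      Finset.prod_eq_zero (mem_univ i0) hdf0
    rw [hempty, hzero]
    simp

lemma main_identity (a b : ℕ) :
    ((univ.filter fun w : Fin (a * b) → Fin a => Ballot b w).card)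
        * ∏ i : Fin a, (b + (i : ℕ)).factorial
      = (a * b).factorial * ∏ i ∈ range a, Nat.factorial i := by
  classical
  have hrefl := reflection (n := a * b) (a := a) b
  have hsum : ∑ p ∈ (univ.filter fun p : Equiv.Perm (Fin a) × (Fin (a * b) → Fin a) =>
        ∀ i, path p.1 p.2 (a * b) i = b + (i : ℕ)), ((Equiv.Perm.sign p.1 : ℤ))
      = ∑ σ : Equiv.Perm (Fin a), ((Equiv.Perm.sign σ : ℤ)) *
          (((univ.filter fun w : Fin (a * b) → Fin a =>
            ∀ i, path σ w (a * b) i = b + (i : ℕ)).card : ℕ) : ℤ) := by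
    rw [Finset.sum_filter, Fintype.sum_prod_type]
    apply Finset.sum_congr rfl
    intro σ _
    rw [← Finset.sum_filter]
    show ∑ _w ∈ filter (fun w : Fin (a * b) → Fin a =>
        ∀ i, path σ w (a * b) i = b + (i : ℕ)) univ, ((Equiv.Perm.sign σ : ℤ)) = _
    rw [Finset.sum_const, nsmul_eq_mul, mul_comm]
  -- ℤ-level identity
  have hz : (((univ.filter fun w : Fin (a * b) → Fin a => Ballot b w).card : ℕ) : ℤ)
        * ∏ i : Fin a, ((b + (i : ℕ)).factorial : ℤ)
      = (((a * b).factorial : ℕ) : ℤ) * ∏ i ∈ range a, ((Nat.factorial i : ℕ) : ℤ) := by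
    rw [← hrefl, hsum, Finset.sum_mul]
    have hterm : ∀ σ : Equiv.Perm (Fin a),
        ((Equiv.Perm.sign σ : ℤ)) * (((univ.filter fun w : Fin (a * b) → Fin a =>
            ∀ i, path σ w (a * b) i = b + (i : ℕ)).card : ℕ) : ℤ)
          * ∏ i : Fin a, ((b + (i : ℕ)).factorial : ℤ)
        = (((a * b).factorial : ℕ) : ℤ) * (((Equiv.Perm.sign σ : ℤ)) *
            ∏ i : Fin a, ((b + (i : ℕ)).descFactorial ((σ i : ℕ)) : ℤ)) := by
      intro σ
      have h := per_sigma a b σ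
      have hz' := congrArg (fun x : ℕ => (x : ℤ)) h
      push_cast at hz'
      rw [mul_assoc, hz']
      ring
    rw [Finset.sum_congr rfl (fun σ _ => hterm σ), ← Finset.mul_sum, det_descFactorial a b]
  have := hz
  push_cast at this
  exact_mod_cast this

end HLFAux

open HLFAux Finset in
/-- The hook length formula for rectangular shapes: the number of standard Young
tableaux of shape `a × b` satisfies
`#SYT(a,b) · ∏_{i<a} (b+i)! = (ab)! · ∏_{i<a} i!`. -/
theorem hook_length_formula_rectangular (a b : ℕ) :
    Nat.card {T : Fin a × Fin b → Fin (a * b) //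
        Function.Bijective T ∧
        (∀ j : Fin b, StrictMono (fun i => T (i, j))) ∧
        (∀ i : Fin a, StrictMono (fun j => T (i, j)))} *
      (∏ i ∈ Finset.range a, (b + i).factorial) =
      (a * b).factorial * ∏ i ∈ Finset.range a, i.factorial := by
  have h1 : Nat.card {T : Fin a × Fin b → Fin (a * b) //
      Function.Bijective T ∧
      (∀ j : Fin b, StrictMono (fun i => T (i, j))) ∧
      (∀ i : Fin a, StrictMono (fun j => T (i, j)))}
      = (univ.filter fun w : Fin (a * b) → Fin a => Ballot b w).card := card_syt a b
  have h2 : ∏ i : Fin a, (b + (i : ℕ)).factorial = ∏ i ∈ Finset.range a, (b + i).factorial :=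
    Fin.prod_univ_eq_prod_range (fun i => (b + i).factorial) a
  rw [h1, ← h2]
  exact main_identity a b
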